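/- For all real numbers α > 0 and Q ≥ 0, the improper integral ∫₀^∞ 2·sinh(2π·α·y)·y^(−3/2)·exp(−(4π·Q + 2π·α)·y) dy converges and equals 4π·(√(Q + α) − √Q). -/

import Mathlib

open MeasureTheory Real Set Filter

lemma gamma_int {s r : ℝ} (hs : -1 < s) (hr : 0 < r) :
    IntegrableOn (fun t : ℝ => t ^ s * Real.exp (-(r * t))) (Ioi (0:ℝ)) := by
  have := integrableOn_rpow_mul_exp_neg_mul_rpow (p := 1) hs one_pos hr
  simpa [Real.rpow_one, neg_mul] using this

lemma aux1 {c : ℝ} (hc : 0 ≤ c) :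
    IntegrableOn (fun y : ℝ => c * (y ^ (-(1:ℝ)/2) * Real.exp (-(c * y)))) (Ioi (0:ℝ)) ∧
    ∫ y in Ioi (0:ℝ), c * (y ^ (-(1:ℝ)/2) * Real.exp (-(c * y)))
      = Real.sqrt Real.pi * Real.sqrt c := by
  rcases hc.eq_or_lt with rfl | hc
  · constructor
    · simpa using (integrableOn_zero : IntegrableOn (fun _ : ℝ => (0:ℝ)) (Ioi 0) volume)
    · simp
  · have h1 : (-(1:ℝ)/2) = (1/2 : ℝ) - 1 := by norm_num
    constructor
    · exact ((gamma_int (by norm_num) hc)).const_mul c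
    · rw [MeasureTheory.integral_const_mul]
      rw [h1, Real.integral_rpow_mul_exp_neg_mul_Ioi (by norm_num) hc,
        Real.Gamma_one_half_eq, ← Real.sqrt_eq_rpow, one_div, Real.sqrt_inv]
      rw [show c * ((Real.sqrt c)⁻¹ * Real.sqrt Real.pi)
            = (c / Real.sqrt c) * Real.sqrt Real.pi by ring, Real.div_sqrt]
      ring

lemma sub_exp_integral {a b : ℝ} (ha : 0 ≤ a) (hab : a < b) :
    IntegrableOn (fun y : ℝ => (Real.exp (-(a*y)) - Real.exp (-(b*y))) * y ^ (-(3:ℝ)/2))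
      (Ioi (0:ℝ)) ∧
    ∫ y in Ioi (0:ℝ), (Real.exp (-(a*y)) - Real.exp (-(b*y))) * y ^ (-(3:ℝ)/2)
      = 2 * Real.sqrt Real.pi * (Real.sqrt b - Real.sqrt a) := by
  have hb : 0 < b := lt_of_le_of_lt ha hab
  set g : ℝ → ℝ := fun y => (Real.exp (-(a*y)) - Real.exp (-(b*y))) * y ^ (-(3:ℝ)/2) with hg
  set h : ℝ → ℝ := fun y =>
      2 * (a * (y ^ (-(1:ℝ)/2) * Real.exp (-(a*y)))) -
      2 * (b * (y ^ (-(1:ℝ)/2) * Real.exp (-(b*y)))) with hh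
  set F : ℝ → ℝ := fun y => -2 * (y ^ (-(1:ℝ)/2) * (Real.exp (-(a*y)) - Real.exp (-(b*y)))) with hF
  -- pointwise bounds
  have hdiff_nonneg : ∀ y : ℝ, 0 ≤ y → 0 ≤ Real.exp (-(a*y)) - Real.exp (-(b*y)) := by
    intro y hy
    have : -(b*y) ≤ -(a*y) := by nlinarith
    simpa using Real.exp_le_exp.mpr this
  have hdiff_le_one : ∀ y : ℝ, 0 ≤ y → Real.exp (-(a*y)) - Real.exp (-(b*y)) ≤ 1 := by
    intro y hy
    have h1 : Real.exp (-(a*y)) ≤ 1 := Real.exp_le_one_iff.mpr (by nlinarith)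
    have h2 : 0 < Real.exp (-(b*y)) := Real.exp_pos _
    linarith
  have hdiff_le_lin : ∀ y : ℝ, 0 ≤ y →
      Real.exp (-(a*y)) - Real.exp (-(b*y)) ≤ (b - a) * y := by
    intro y hy
    have key : Real.exp (-(a*y)) - Real.exp (-(b*y))
        = Real.exp (-(a*y)) * (1 - Real.exp (-((b-a)*y))) := by
      rw [mul_sub, mul_one, ← Real.exp_add]; ring_nf
    rw [key]
    have h1 : Real.exp (-(a*y)) ≤ 1 := Real.exp_le_one_iff.mpr (by nlinarith)
    have h2 : 1 - Real.exp (-((b-a)*y)) ≤ (b-a)*y := by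
      have := Real.add_one_le_exp (-((b-a)*y)); linarith
    have h3 : 0 ≤ 1 - Real.exp (-((b-a)*y)) := by
      have : Real.exp (-((b-a)*y)) ≤ 1 := Real.exp_le_one_iff.mpr (by nlinarith)
      linarith
    nlinarith
  -- measurability of g
  have hg_cont : ContinuousOn g (Ioi (0:ℝ)) := by
    apply ContinuousOn.mul
    · exact ((Real.continuous_exp.comp (continuous_const.mul continuous_id).neg).sub
        (Real.continuous_exp.comp (continuous_const.mul continuous_id).neg)).continuousOn
    · exact continuousOn_id.rpow_const (fun y hy => Or.inl (ne_of_gt hy))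
  -- integrability of g
  have hg_int : IntegrableOn g (Ioi (0:ℝ)) := by
    have hsplit : Ioc (0:ℝ) 1 ∪ Ioi (1:ℝ) = Ioi (0:ℝ) := Ioc_union_Ioi_eq_Ioi zero_le_one
    rw [← hsplit]
    apply IntegrableOn.union
    · -- on (0,1]
      have hdom : IntegrableOn (fun y : ℝ => (b-a) * y ^ (-(1:ℝ)/2)) (Ioc (0:ℝ) 1) := by
        have := (intervalIntegral.intervalIntegrable_rpow'
          (show (-1:ℝ) < -(1:ℝ)/2 by norm_num) (a := 0) (b := 1))
        rw [intervalIntegrable_iff_integrableOn_Ioc_of_le zero_le_one] at this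
        exact this.const_mul _
      apply Integrable.mono' hdom
        ((hg_cont.mono Ioc_subset_Ioi_self).aestronglyMeasurable measurableSet_Ioc)
      rw [ae_restrict_iff' measurableSet_Ioc]
      filter_upwards with y hy
      have hy0 : 0 < y := hy.1
      have hrw : y * y ^ (-(3:ℝ)/2) = y ^ (-(1:ℝ)/2) := by
        rw [show y * y ^ (-(3:ℝ)/2) = y ^ (1:ℝ) * y ^ (-(3:ℝ)/2) by rw [Real.rpow_one],
          ← Real.rpow_add hy0]
        norm_num
      have hnn : 0 ≤ g y := mul_nonneg (hdiff_nonneg y hy0.le) (Real.rpow_nonneg hy0.le _)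
      rw [Real.norm_eq_abs, abs_of_nonneg hnn]
      calc g y ≤ ((b-a) * y) * y ^ (-(3:ℝ)/2) :=
            mul_le_mul_of_nonneg_right (hdiff_le_lin y hy0.le) (Real.rpow_nonneg hy0.le _)
        _ = (b-a) * (y * y ^ (-(3:ℝ)/2)) := by ring
        _ = (b-a) * y ^ (-(1:ℝ)/2) := by rw [hrw]
    · -- on (1,∞)
      have hdom : IntegrableOn (fun y : ℝ => y ^ (-(3:ℝ)/2)) (Ioi (1:ℝ)) :=
        integrableOn_Ioi_rpow_of_lt (by norm_num) one_pos
      apply Integrable.mono' hdom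
        ((hg_cont.mono (Ioi_subset_Ioi zero_le_one)).aestronglyMeasurable measurableSet_Ioi)
      rw [ae_restrict_iff' measurableSet_Ioi]
      filter_upwards with y hy
      have hy0 : (0:ℝ) < y := lt_trans one_pos hy
      have hnn : 0 ≤ g y := mul_nonneg (hdiff_nonneg y hy0.le) (Real.rpow_nonneg hy0.le _)
      rw [Real.norm_eq_abs, abs_of_nonneg hnn]
      calc g y ≤ 1 * y ^ (-(3:ℝ)/2) :=
            mul_le_mul_of_nonneg_right (hdiff_le_one y hy0.le) (Real.rpow_nonneg hy0.le _)
        _ = y ^ (-(3:ℝ)/2) := one_mul _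
  -- integrability and integral of h
  obtain ⟨hIa, hIav⟩ := aux1 ha
  obtain ⟨hIb, hIbv⟩ := aux1 hb.le
  have hh_int : IntegrableOn h (Ioi (0:ℝ)) := ((hIa.const_mul 2).sub (hIb.const_mul 2))
  have hh_val : ∫ y in Ioi (0:ℝ), h y
      = 2 * Real.sqrt Real.pi * Real.sqrt a - 2 * Real.sqrt Real.pi * Real.sqrt b := by
    rw [hh]
    rw [MeasureTheory.integral_sub (hIa.const_mul 2) (hIb.const_mul 2),
      MeasureTheory.integral_const_mul 2, MeasureTheory.integral_const_mul 2, hIav, hIbv]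
    ring
  -- derivative of F
  have hderiv : ∀ y ∈ Ioi (0:ℝ), HasDerivAt F (g y + h y) y := by
    intro y hy
    have hy0 : (0:ℝ) < y := hy
    have d1 : HasDerivAt (fun y : ℝ => y ^ (-(1:ℝ)/2))
        ((-(1:ℝ)/2) * y ^ ((-(1:ℝ)/2) - 1)) y :=
      Real.hasDerivAt_rpow_const (Or.inl hy0.ne')
    have d2 : HasDerivAt (fun y : ℝ => Real.exp (-(a*y))) (-a * Real.exp (-(a*y))) y := by
      have : HasDerivAt (fun y : ℝ => -(a*y)) (-a) y := by
        simpa using ((hasDerivAt_id y).const_mul a).fun_neg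
      simpa [mul_comm] using this.exp
    have d3 : HasDerivAt (fun y : ℝ => Real.exp (-(b*y))) (-b * Real.exp (-(b*y))) y := by
      have : HasDerivAt (fun y : ℝ => -(b*y)) (-b) y := by
        simpa using ((hasDerivAt_id y).const_mul b).fun_neg
      simpa [mul_comm] using this.exp
    have d4 := ((d1.fun_mul (d2.fun_sub d3)).const_mul (-2 : ℝ))
    refine d4.congr_deriv ?_
    simp only [hg, hh]
    rw [show ((-(1:ℝ)/2) - 1) = -(3:ℝ)/2 from by norm_num]
    ring
  -- limit of F at 0+
  have hF0 : F 0 = 0 := by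
    simp [hF]
  have hcont : ContinuousWithinAt F (Ici (0:ℝ)) 0 := by
    have hT : Tendsto F (nhdsWithin 0 (Ici (0:ℝ))) (nhds 0) := by
      apply squeeze_zero_norm' (a := fun y => 2 * (b - a) * Real.sqrt y)
      · filter_upwards [self_mem_nhdsWithin] with y hy
        have hy0 : (0:ℝ) ≤ y := hy
        rcases hy0.eq_or_lt with rfl | hy0
        · simp [hF]
        · have hnn : 0 ≤ Real.exp (-(a*y)) - Real.exp (-(b*y)) := hdiff_nonneg y hy0.le
          have hpow : 0 ≤ y ^ (-(1:ℝ)/2) := Real.rpow_nonneg hy0.le _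
          have hFy : ‖F y‖ = 2 * (y ^ (-(1:ℝ)/2) * (Real.exp (-(a*y)) - Real.exp (-(b*y)))) := by
            simp only [hF]
            rw [Real.norm_eq_abs,
              show -2 * (y ^ (-(1:ℝ)/2) * (Real.exp (-(a*y)) - Real.exp (-(b*y))))
              = -(2 * (y ^ (-(1:ℝ)/2) * (Real.exp (-(a*y)) - Real.exp (-(b*y))))) by ring,
              abs_neg, abs_of_nonneg (by positivity)]
          rw [hFy]
          have h1 : y ^ (-(1:ℝ)/2) * (Real.exp (-(a*y)) - Real.exp (-(b*y)))
              ≤ y ^ (-(1:ℝ)/2) * ((b-a) * y) :=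
            mul_le_mul_of_nonneg_left (hdiff_le_lin y hy0.le) hpow
          have h2 : y ^ (-(1:ℝ)/2) * y = Real.sqrt y := by
            rw [Real.sqrt_eq_rpow,
              show y ^ (-(1:ℝ)/2) * y = y ^ (-(1:ℝ)/2) * y ^ (1:ℝ) by rw [Real.rpow_one],
              ← Real.rpow_add hy0]
            norm_num
          calc 2 * (y ^ (-(1:ℝ)/2) * (Real.exp (-(a*y)) - Real.exp (-(b*y))))
              ≤ 2 * (y ^ (-(1:ℝ)/2) * ((b-a) * y)) := by linarith
            _ = 2 * (b - a) * (y ^ (-(1:ℝ)/2) * y) := by ring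
            _ = 2 * (b - a) * Real.sqrt y := by rw [h2]
      · have hT2 := (Real.continuous_sqrt.tendsto 0).const_mul (2*(b-a))
        rw [Real.sqrt_zero, mul_zero] at hT2
        exact hT2.mono_left nhdsWithin_le_nhds
    simpa [ContinuousWithinAt, hF0] using hT
  -- limit of F at ∞
  have htop : Tendsto F atTop (nhds (0:ℝ)) := by
    apply squeeze_zero_norm' (a := fun y => 2 * y ^ (-(1:ℝ)/2))
    · filter_upwards [eventually_gt_atTop (0:ℝ)] with y hy0
      have hnn : 0 ≤ Real.exp (-(a*y)) - Real.exp (-(b*y)) := hdiff_nonneg y hy0.le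
      have hpow : 0 ≤ y ^ (-(1:ℝ)/2) := Real.rpow_nonneg hy0.le _
      have : ‖F y‖ = 2 * (y ^ (-(1:ℝ)/2) * (Real.exp (-(a*y)) - Real.exp (-(b*y)))) := by
        simp only [hF]
        rw [Real.norm_eq_abs,
          show -2 * (y ^ (-(1:ℝ)/2) * (Real.exp (-(a*y)) - Real.exp (-(b*y))))
            = -(2 * (y ^ (-(1:ℝ)/2) * (Real.exp (-(a*y)) - Real.exp (-(b*y))))) by ring,
          abs_neg, abs_of_nonneg (by positivity)]
      rw [this]
      have h1 : y ^ (-(1:ℝ)/2) * (Real.exp (-(a*y)) - Real.exp (-(b*y)))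
          ≤ y ^ (-(1:ℝ)/2) * 1 :=
        mul_le_mul_of_nonneg_left (hdiff_le_one y hy0.le) hpow
      nlinarith
    · have : Tendsto (fun y : ℝ => y ^ (-(1:ℝ)/2)) atTop (nhds 0) := by
        have := tendsto_rpow_neg_atTop (show (0:ℝ) < 1/2 by norm_num)
        simpa [neg_div] using this
      simpa using this.const_mul (2:ℝ)
  -- FTC
  have hsum_int : IntegrableOn (fun y => g y + h y) (Ioi (0:ℝ)) := hg_int.add hh_int
  have hFTC := integral_Ioi_of_hasDerivAt_of_tendsto hcont hderiv hsum_int htop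
  rw [hF0, sub_zero] at hFTC
  rw [MeasureTheory.integral_add hg_int hh_int, hh_val] at hFTC
  refine ⟨hg_int, ?_⟩
  have : ∫ y in Ioi (0:ℝ), g y
      = 2 * Real.sqrt Real.pi * (Real.sqrt b - Real.sqrt a) := by linarith
  exact this

/-- For all real `α > 0` and `Q ≥ 0`, the improper integral
`∫₀^∞ 2·sinh(2π·α·y)·y^(−3/2)·exp(−(4π·Q + 2π·α)·y) dy` converges and equals
`4π·(√(Q + α) − √Q)`. -/
theorem whittaker_integral_eval (α Q : ℝ) (hα : 0 < α) (hQ : 0 ≤ Q) :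
    IntegrableOn
      (fun y : ℝ => 2 * Real.sinh (2 * Real.pi * α * y) * y ^ (-(3 : ℝ) / 2) *
        Real.exp (-(4 * Real.pi * Q + 2 * Real.pi * α) * y))
      (Ioi (0 : ℝ)) ∧
    ∫ y in Ioi (0 : ℝ), 2 * Real.sinh (2 * Real.pi * α * y) * y ^ (-(3 : ℝ) / 2) *
        Real.exp (-(4 * Real.pi * Q + 2 * Real.pi * α) * y)
      = 4 * Real.pi * (Real.sqrt (Q + α) - Real.sqrt Q) := by
  have hπ := Real.pi_pos
  have ha : 0 ≤ 4 * Real.pi * Q := by positivity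
  have hab : 4 * Real.pi * Q < 4 * Real.pi * Q + 4 * Real.pi * α := by nlinarith
  obtain ⟨hint, hval⟩ := sub_exp_integral ha hab
  have hfun : (fun y : ℝ => 2 * Real.sinh (2 * Real.pi * α * y) * y ^ (-(3 : ℝ) / 2) *
        Real.exp (-(4 * Real.pi * Q + 2 * Real.pi * α) * y))
      = (fun y : ℝ => (Real.exp (-((4 * Real.pi * Q) * y)) -
          Real.exp (-((4 * Real.pi * Q + 4 * Real.pi * α) * y))) * y ^ (-(3 : ℝ) / 2)) := by
    funext y
    rw [Real.sinh_eq,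
      show 2 * ((Real.exp (2*Real.pi*α*y) - Real.exp (-(2*Real.pi*α*y)))/2) * y ^ (-(3:ℝ)/2) *
          Real.exp (-(4*Real.pi*Q + 2*Real.pi*α)*y)
        = Real.exp (2*Real.pi*α*y + -(4*Real.pi*Q + 2*Real.pi*α)*y) * y ^ (-(3:ℝ)/2)
          - Real.exp (-(2*Real.pi*α*y) + -(4*Real.pi*Q + 2*Real.pi*α)*y) * y ^ (-(3:ℝ)/2) from by
        rw [Real.exp_add, Real.exp_add]; ring,
      show 2*Real.pi*α*y + -(4*Real.pi*Q + 2*Real.pi*α)*y = -((4*Real.pi*Q)*y) by ring,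
      show -(2*Real.pi*α*y) + -(4*Real.pi*Q + 2*Real.pi*α)*y
        = -((4*Real.pi*Q + 4*Real.pi*α)*y) by ring]
    ring
  constructor
  · rw [hfun]; exact hint
  · rw [hfun, hval]
    have h4 : Real.sqrt (4*Real.pi*Q) = 2 * Real.sqrt Real.pi * Real.sqrt Q := by
      rw [show (4*Real.pi*Q) = (4*Real.pi)*Q by ring, Real.sqrt_mul (by positivity),
        show (4*Real.pi) = (2:ℝ)^2*Real.pi by norm_num, Real.sqrt_mul (by positivity),
        Real.sqrt_sq (by norm_num : (0:ℝ) ≤ 2)]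
    have h5 : Real.sqrt (4*Real.pi*Q + 4*Real.pi*α)
        = 2 * Real.sqrt Real.pi * Real.sqrt (Q+α) := by
      rw [show (4*Real.pi*Q + 4*Real.pi*α) = (4*Real.pi)*(Q+α) by ring,
        Real.sqrt_mul (by positivity),
        show (4*Real.pi) = (2:ℝ)^2*Real.pi by norm_num, Real.sqrt_mul (by positivity),
        Real.sqrt_sq (by norm_num : (0:ℝ) ≤ 2)]
    rw [h4, h5]
    have h6 : Real.sqrt Real.pi * Real.sqrt Real.pi = Real.pi := Real.mul_self_sqrt hπ.le
    linear_combination (4 * Real.sqrt (Q+α) - 4 * Real.sqrt Q) * h6
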